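/- Let π : Σ* → G be a choice of generators for a group G, and suppose there exist a combing R ⊆ Σ* and a constant C ≥ 0 such that every R-triangle T in G has width δ(T) ≤ |T|/75 + C. Then there is a constant K with the following property: for every n ≥ 4 and every cyclic sequence g₁, …, gₙ of elements of G with d(g_i, g_{i+1}) ≤ 1 for 1 ≤ i < n and d(gₙ, g₁) ≤ 1, there exists a triangulation of the convex n-gon with vertices labelled 1, …, n — that is, a maximal set of diagonals {i, j} that pairwise do not cross (diagonals {i,j} and {k,l} with i < j and k < l cross if i < k < j < l or k < i < l < j) — such that every diagonal {i, j} of the triangulation satisfies d(g_i, g_j) ≤ n/6 + K. -/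

import Mathlib

/-- The image in `G` of a word over the generating alphabet, for the monoid homomorphism
`Σ* → G` determined by the letter map `φ`. -/
def wordProd {S G : Type} [Group G] (φ : S → G) (w : List S) : G :=
  (w.map φ).prod

/-- The word metric `d(g,h) = min {|w| : π(w) = g⁻¹h}` on `G`. -/
noncomputable def wdist {S G : Type} [Group G] (φ : S → G) (g h : G) : ℕ :=
  sInf {n : ℕ | ∃ w : List S, wordProd φ w = g⁻¹ * h ∧ w.length = n}

/-- The set of points of the path determined by the word `w` based at `g`. -/
def pathPoints {S G : Type} [Group G] (φ : S → G) (g : G) (w : List S) : Set G :=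
  {x | ∃ i ≤ w.length, x = g * wordProd φ (w.take i)}

/-- A triangle: three vertices joined by three words. -/
structure Tri (S G : Type) [Group G] (φ : S → G) where
  g₀ : G
  g₁ : G
  g₂ : G
  u : List S
  v : List S
  w : List S
  hu : wordProd φ u = g₀⁻¹ * g₁
  hv : wordProd φ v = g₁⁻¹ * g₂
  hw : wordProd φ w = g₂⁻¹ * g₀

/-- A triangle is `δ`-thin if every point on each side is at word-metric distance at most `δ`
from the union of the point sets of the other two sides. -/
def IsThin {S G : Type} [Group G] (φ : S → G) (δ : ℝ) (T : Tri S G φ) : Prop :=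
  (∀ p ∈ pathPoints φ T.g₀ T.u,
      ∃ q ∈ pathPoints φ T.g₁ T.v ∪ pathPoints φ T.g₂ T.w, (wdist φ p q : ℝ) ≤ δ) ∧
  (∀ p ∈ pathPoints φ T.g₁ T.v,
      ∃ q ∈ pathPoints φ T.g₀ T.u ∪ pathPoints φ T.g₂ T.w, (wdist φ p q : ℝ) ≤ δ) ∧
  (∀ p ∈ pathPoints φ T.g₂ T.w,
      ∃ q ∈ pathPoints φ T.g₀ T.u ∪ pathPoints φ T.g₁ T.v, (wdist φ p q : ℝ) ≤ δ)

/-- A triangle is geodesic if each of its three sides is a geodesic. -/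
def IsGeodesicTri {S G : Type} [Group G] (φ : S → G) (T : Tri S G φ) : Prop :=
  T.u.length = wdist φ T.g₀ T.g₁ ∧ T.v.length = wdist φ T.g₁ T.g₂ ∧
    T.w.length = wdist φ T.g₂ T.g₀

/-- `G` is word hyperbolic (with respect to the choice of generators `φ`) if all geodesic
triangles are uniformly thin. -/
def WordHyperbolic {S G : Type} [Group G] (φ : S → G) : Prop :=
  ∃ δ : ℝ, 0 ≤ δ ∧ ∀ T : Tri S G φ, IsGeodesicTri φ T → IsThin φ δ T

/-- A combing: a language projecting onto `G`. -/
def IsCombing {S G : Type} [Group G] (φ : S → G) (R : Language S) : Prop :=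
  ∀ g : G, ∃ w ∈ R, wordProd φ w = g

/-- The word `u#v#w` over `Σ ∪ {#}`, where the letter `#` is modelled by `none`. -/
def hashWord {S : Type} (u v w : List S) : List (Option S) :=
  u.map some ++ [none] ++ v.map some ++ [none] ++ w.map some

/-- The multiplication table `{u#v#w : u,v,w ∈ R, π(u)π(v)π(w) = 1}` determined by
the combing `R`. -/
def multTable {S G : Type} [Group G] (φ : S → G) (R : Language S) : Language (Option S) :=
  {z | ∃ u ∈ R, ∃ v ∈ R, ∃ w ∈ R,
    wordProd φ u * wordProd φ v * wordProd φ w = 1 ∧ z = hashWord u v w}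

/-- The width of a triangle: the smallest `δ` for which it is `δ`-thin. -/
noncomputable def triWidth {S G : Type} [Group G] (φ : S → G) (T : Tri S G φ) : ℝ :=
  sInf {δ : ℝ | IsThin φ δ T}

/-- The norm of a triangle: the maximum word-metric distance between its vertices. -/
noncomputable def triNorm {S G : Type} [Group G] (φ : S → G) (T : Tri S G φ) : ℕ :=
  max (wdist φ T.g₀ T.g₁) (max (wdist φ T.g₁ T.g₂) (wdist φ T.g₀ T.g₂))

/-- A diagonal `{i, j}` (with `i < j`) of the convex `n`-gon whose vertices are labelled
`1, …, n`: the endpoints are distinct, non-adjacent vertices of the polygon. -/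
def IsDiagonal (n : ℕ) (p : ℕ × ℕ) : Prop :=
  1 ≤ p.1 ∧ p.1 + 1 < p.2 ∧ p.2 ≤ n ∧ ¬(p.1 = 1 ∧ p.2 = n)

/-- Diagonals `{i,j}` and `{k,l}` with `i < j`, `k < l` cross if `i < k < j < l` or
`k < i < l < j`. -/
def CrossesDiag (p q : ℕ × ℕ) : Prop :=
  (p.1 < q.1 ∧ q.1 < p.2 ∧ p.2 < q.2) ∨ (q.1 < p.1 ∧ p.1 < q.2 ∧ q.2 < p.2)

/-! ### Auxiliary lemmas -/

section Basics
variable {S G : Type} [Group G] (φ : S → G)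

lemma wordProd_nil : wordProd φ ([] : List S) = 1 := rfl

lemma wordProd_cons (a : S) (w : List S) : wordProd φ (a :: w) = φ a * wordProd φ w := by
  simp [wordProd]

lemma wordProd_append (u v : List S) :
    wordProd φ (u ++ v) = wordProd φ u * wordProd φ v := by
  simp [wordProd]

lemma wordProd_inv_reverse (inv : S → S) (hφinv : ∀ a, φ (inv a) = (φ a)⁻¹) (w : List S) :
    wordProd φ ((w.map inv).reverse) = (wordProd φ w)⁻¹ := by
  induction w with
  | nil => simp [wordProd]
  | cons a t ih =>
      simp only [List.map_cons, List.reverse_cons, wordProd_append, wordProd_cons, ih,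
        wordProd_nil, mul_one, hφinv]
      rw [mul_inv_rev]

lemma wdist_le (g h : G) {w : List S} (hw : wordProd φ w = g⁻¹ * h) :
    wdist φ g h ≤ w.length :=
  Nat.sInf_le ⟨w, hw, rfl⟩

lemma exists_geodesic (hsurj : Function.Surjective (wordProd φ)) (g h : G) :
    ∃ w : List S, wordProd φ w = g⁻¹ * h ∧ w.length = wdist φ g h := by
  have hne : {n : ℕ | ∃ w : List S, wordProd φ w = g⁻¹ * h ∧ w.length = n}.Nonempty := by
    obtain ⟨w, hw⟩ := hsurj (g⁻¹ * h)
    exact ⟨w.length, w, hw, rfl⟩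
  exact Nat.sInf_mem hne

lemma wdist_self (g : G) : wdist φ g g = 0 :=
  Nat.le_zero.1 (wdist_le φ g g (w := []) (by simp [wordProd]))

lemma wdist_triangle (hsurj : Function.Surjective (wordProd φ)) (g h k : G) :
    wdist φ g k ≤ wdist φ g h + wdist φ h k := by
  obtain ⟨w₁, hw₁, hl₁⟩ := exists_geodesic φ hsurj g h
  obtain ⟨w₂, hw₂, hl₂⟩ := exists_geodesic φ hsurj h k
  have : wordProd φ (w₁ ++ w₂) = g⁻¹ * k := by
    rw [wordProd_append, hw₁, hw₂]; group
  calc wdist φ g k ≤ (w₁ ++ w₂).length := wdist_le φ g k this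
  _ = wdist φ g h + wdist φ h k := by simp [hl₁, hl₂]

lemma wdist_symm (inv : S → S) (hφinv : ∀ a, φ (inv a) = (φ a)⁻¹)
    (hsurj : Function.Surjective (wordProd φ)) (g h : G) :
    wdist φ g h = wdist φ h g := by
  have key : ∀ x y : G, wdist φ x y ≤ wdist φ y x := by
    intro x y
    obtain ⟨w, hw, hl⟩ := exists_geodesic φ hsurj y x
    have : wordProd φ ((w.map inv).reverse) = x⁻¹ * y := by
      rw [wordProd_inv_reverse φ inv hφinv, hw]; group
    calc wdist φ x y ≤ ((w.map inv).reverse).length := wdist_le φ x y this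
    _ = wdist φ y x := by simp [hl]
  exact le_antisymm (key g h) (key h g)

lemma wdist_take_le (g : G) (w : List S) {s t : ℕ} (hst : s ≤ t) :
    wdist φ (g * wordProd φ (w.take s)) (g * wordProd φ (w.take t)) ≤ t - s := by
  have hsplit : w.take t = w.take s ++ ((w.drop s).take (t - s)) := by
    rw [← List.take_add]
    congr 1
    omega
  have hw : wordProd φ ((w.drop s).take (t - s)) =
      (g * wordProd φ (w.take s))⁻¹ * (g * wordProd φ (w.take t)) := by
    rw [hsplit, wordProd_append]; group
  calc wdist φ _ _ ≤ ((w.drop s).take (t - s)).length := wdist_le φ _ _ hw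
  _ ≤ t - s := by simp [List.length_take]

lemma wdist_base_le (g : G) (w : List S) (s : ℕ) :
    wdist φ g (g * wordProd φ (w.take s)) ≤ s := by
  have := wdist_take_le φ g w (s := 0) (t := s) (Nat.zero_le s)
  simpa [wordProd] using this

lemma wdist_tip_le (g : G) (w : List S) {s : ℕ} (hs : s ≤ w.length) :
    wdist φ (g * wordProd φ (w.take s)) (g * wordProd φ w) ≤ w.length - s := by
  have := wdist_take_le φ g w (s := s) (t := w.length) hs
  simpa using this

lemma chain_wdist_le (hsurj : Function.Surjective (wordProd φ)) (h : ℕ → G) (L : ℕ)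
    (hstep : ∀ t < L, wdist φ (h t) (h (t + 1)) ≤ 1) :
    ∀ s t, s ≤ t → t ≤ L → wdist φ (h s) (h t) ≤ t - s := by
  intro s t hst htL
  induction t with
  | zero => simp [Nat.le_zero.1 hst, wdist_self]
  | succ m ih =>
      rcases Nat.eq_or_lt_of_le hst with he | hlt
      · simp [← he, wdist_self]
      · have h1 : s ≤ m := Nat.lt_succ_iff.1 hlt
        have h2 : m ≤ L := Nat.le_of_succ_le htL
        calc wdist φ (h s) (h (m+1)) ≤ wdist φ (h s) (h m) + wdist φ (h m) (h (m+1)) :=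
              wdist_triangle φ hsurj _ _ _
        _ ≤ (m - s) + 1 := Nat.add_le_add (ih h1 h2) (hstep m (by omega))
        _ ≤ (m + 1) - s := by omega

lemma pathPoints_base_mem (g : G) (w : List S) : g ∈ pathPoints φ g w :=
  ⟨0, Nat.zero_le _, by simp [wordProd]⟩

lemma isThin_mono {δ δ' : ℝ} {T : Tri S G φ} (h : IsThin φ δ T) (hle : δ ≤ δ') :
    IsThin φ δ' T := by
  obtain ⟨h1, h2, h3⟩ := h
  refine ⟨?_, ?_, ?_⟩ <;> intro p hp
  · obtain ⟨q, hq, hd⟩ := h1 p hp; exact ⟨q, hq, hd.trans hle⟩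
  · obtain ⟨q, hq, hd⟩ := h2 p hp; exact ⟨q, hq, hd.trans hle⟩
  · obtain ⟨q, hq, hd⟩ := h3 p hp; exact ⟨q, hq, hd.trans hle⟩

lemma isThin_big (T : Tri S G φ) :
    IsThin φ ((T.u.length : ℝ) + T.v.length + T.w.length) T := by
  have keyu : ∀ p ∈ pathPoints φ T.g₀ T.u, (wdist φ p T.g₁ : ℝ) ≤ T.u.length := by
    rintro p ⟨i, hi, rfl⟩
    have h1 : T.g₀ * wordProd φ T.u = T.g₁ := by rw [T.hu]; group
    have := wdist_tip_le φ T.g₀ T.u hi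
    rw [h1] at this
    exact_mod_cast this.trans (Nat.sub_le _ _)
  have keyv : ∀ p ∈ pathPoints φ T.g₁ T.v, (wdist φ p T.g₂ : ℝ) ≤ T.v.length := by
    rintro p ⟨i, hi, rfl⟩
    have h1 : T.g₁ * wordProd φ T.v = T.g₂ := by rw [T.hv]; group
    have := wdist_tip_le φ T.g₁ T.v hi
    rw [h1] at this
    exact_mod_cast this.trans (Nat.sub_le _ _)
  have keyw : ∀ p ∈ pathPoints φ T.g₂ T.w, (wdist φ p T.g₀ : ℝ) ≤ T.w.length := by
    rintro p ⟨i, hi, rfl⟩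
    have h1 : T.g₂ * wordProd φ T.w = T.g₀ := by rw [T.hw]; group
    have := wdist_tip_le φ T.g₂ T.w hi
    rw [h1] at this
    exact_mod_cast this.trans (Nat.sub_le _ _)
  have hu0 : (0:ℝ) ≤ T.u.length := by positivity
  have hv0 : (0:ℝ) ≤ T.v.length := by positivity
  have hw0 : (0:ℝ) ≤ T.w.length := by positivity
  refine ⟨fun p hp => ⟨T.g₁, Or.inl (pathPoints_base_mem φ T.g₁ T.v), by
      have := keyu p hp; linarith⟩,
    fun p hp => ⟨T.g₂, Or.inr (pathPoints_base_mem φ T.g₂ T.w), by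
      have := keyv p hp; linarith⟩,
    fun p hp => ⟨T.g₀, Or.inl (pathPoints_base_mem φ T.g₀ T.u), by
      have := keyw p hp; linarith⟩⟩

lemma isThin_nonneg {δ : ℝ} {T : Tri S G φ} (h : IsThin φ δ T) : 0 ≤ δ := by
  obtain ⟨q, _, hd⟩ := h.1 T.g₀ (pathPoints_base_mem φ T.g₀ T.u)
  have : (0:ℝ) ≤ (wdist φ T.g₀ q : ℝ) := by positivity
  linarith

lemma isThin_of_width_le {C : ℝ} {T : Tri S G φ}
    (h : triWidth φ T ≤ (triNorm φ T : ℝ) / 75 + C) :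
    IsThin φ ((triNorm φ T : ℝ) / 75 + C + 1) T := by
  set s : Set ℝ := {δ : ℝ | IsThin φ δ T} with hs
  have hne : s.Nonempty := ⟨_, isThin_big φ T⟩
  have hbdd : BddBelow s := ⟨0, fun δ hδ => isThin_nonneg φ hδ⟩
  have hlt : sInf s < (triNorm φ T : ℝ) / 75 + C + 1 := lt_of_le_of_lt h (by linarith)
  obtain ⟨δ₀, hδ₀s, hδ₀lt⟩ := (csInf_lt_iff hbdd hne).1 hlt
  exact isThin_mono φ hδ₀s hδ₀lt.le

end Basics

section Geometry
variable {S G : Type} [Fintype S] [Group G]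
variable (inv : S → S) (φ : S → G)
variable (R : Language S) (C : ℝ)
variable (ω : G → List S)

/-- The maximal length of a chosen combing word for an element at distance at most 1
from the identity, or for the identity. -/
noncomputable def LmaxAux : ℕ :=
  max (ω (1:G)).length (Finset.univ.sup fun a : S => (ω ((φ a)⁻¹)).length)

/-- The unit-scale excursion bound. -/
noncomputable def LamAux : ℝ := 1/75 + C + 2 + (LmaxAux φ ω : ℝ)

lemma LamAux_nonneg (hC : 0 ≤ C) : 0 ≤ LamAux φ C ω := by
  have : (0:ℝ) ≤ (LmaxAux φ ω : ℝ) := by positivity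
  unfold LamAux; linarith

/-- Any combing word for a pair at word distance at most one stays within `LamAux`
of its base point. -/
lemma unit_excursion
    (hφinv : ∀ a, φ (inv a) = (φ a)⁻¹)
    (hsurj : Function.Surjective (wordProd φ))
    (hC : 0 ≤ C)
    (hwidth : ∀ T : Tri S G φ, T.u ∈ R → T.v ∈ R → T.w ∈ R →
      triWidth φ T ≤ (triNorm φ T : ℝ) / 75 + C)
    (hωR : ∀ v, ω v ∈ R) (hωP : ∀ v, wordProd φ (ω v) = v)
    (x y : G) (hxy : wdist φ x y ≤ 1) :
    ∀ p ∈ pathPoints φ x (ω (x⁻¹ * y)), (wdist φ x p : ℝ) ≤ LamAux φ C ω := by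
  intro p hp
  -- the degenerate triangle (x, y, x)
  set T : Tri S G φ :=
    ⟨x, y, x, ω (x⁻¹ * y), ω (y⁻¹ * x), ω 1, by rw [hωP], by rw [hωP], by rw [hωP]; group⟩
    with hT
  have hnorm : (triNorm φ T : ℝ) ≤ 1 := by
    have h1 : wdist φ T.g₀ T.g₁ ≤ 1 := hxy
    have h2 : wdist φ T.g₁ T.g₂ ≤ 1 := by
      show wdist φ y x ≤ 1
      rw [← wdist_symm φ inv hφinv hsurj x y]; exact hxy
    have h3 : wdist φ T.g₀ T.g₂ ≤ 1 := by
      show wdist φ x x ≤ 1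
      simp [wdist_self]
    have : triNorm φ T ≤ 1 := by
      unfold triNorm; omega
    exact_mod_cast this
  have hthin : IsThin φ ((1:ℝ)/75 + C + 1) T := by
    have := isThin_of_width_le φ (hwidth T (hωR _) (hωR _) (hωR _))
    exact isThin_mono φ this (by linarith)
  obtain ⟨q, hq, hd⟩ := hthin.1 p hp
  -- the length of the return word is bounded by LmaxAux
  have hLv : (ω (y⁻¹ * x)).length ≤ LmaxAux φ ω := by
    obtain ⟨w, hw, hlen⟩ := exists_geodesic φ hsurj x y
    have hl1 : w.length ≤ 1 := hlen.le.trans hxy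
    match w, hl1 with
    | [], _ =>
        have : x⁻¹ * y = 1 := by rw [← hw]; rfl
        have hyx : y⁻¹ * x = 1 := by
          rw [inv_mul_eq_one] at this ⊢; exact this.symm
        rw [hyx]
        unfold LmaxAux
        exact le_max_left _ _
    | [a], _ =>
        have : x⁻¹ * y = φ a := by rw [← hw]; simp [wordProd]
        have hyx : y⁻¹ * x = (φ a)⁻¹ := by
          rw [← this]; group
        rw [hyx]
        unfold LmaxAux
        have h5 : (ω ((φ a)⁻¹)).length ≤ Finset.univ.sup fun b : S => (ω ((φ b)⁻¹)).length :=
          Finset.le_sup (f := fun b : S => (ω ((φ b)⁻¹)).length) (Finset.mem_univ a)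
        exact h5.trans (le_max_right _ _)
  rcases hq with hq | hq
  · -- q on the return path based at y
    obtain ⟨i, hi, rfl⟩ := hq
    have h1 : wdist φ T.g₁ (T.g₁ * wordProd φ (T.v.take i)) ≤ i := wdist_base_le φ _ _ _
    have h2 : wdist φ x (T.g₁ * wordProd φ (T.v.take i)) ≤
        wdist φ x y + wdist φ T.g₁ (T.g₁ * wordProd φ (T.v.take i)) :=
      wdist_triangle φ hsurj _ _ _
    have h3 : wdist φ x p ≤ wdist φ x (T.g₁ * wordProd φ (T.v.take i)) +
        wdist φ (T.g₁ * wordProd φ (T.v.take i)) p := wdist_triangle φ hsurj _ _ _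
    have h4 : wdist φ (T.g₁ * wordProd φ (T.v.take i)) p =
        wdist φ p (T.g₁ * wordProd φ (T.v.take i)) :=
      wdist_symm φ inv hφinv hsurj _ _
    have hiL : i ≤ LmaxAux φ ω := le_trans hi hLv
    rw [h4] at h3
    have r1 : (wdist φ T.g₁ (T.g₁ * wordProd φ (T.v.take i)) : ℝ) ≤ (i:ℝ) := by
      exact_mod_cast h1
    have r2 : (wdist φ x (T.g₁ * wordProd φ (T.v.take i)) : ℝ) ≤
        (wdist φ x y : ℝ) + (wdist φ T.g₁ (T.g₁ * wordProd φ (T.v.take i)) : ℝ) := by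
      exact_mod_cast h2
    have r3 : (wdist φ x p : ℝ) ≤ (wdist φ x (T.g₁ * wordProd φ (T.v.take i)) : ℝ) +
        (wdist φ p (T.g₁ * wordProd φ (T.v.take i)) : ℝ) := by
      exact_mod_cast h3
    have hcast : (wdist φ x p : ℝ) ≤ (wdist φ x y : ℝ) + i + (wdist φ p (T.g₁ * wordProd φ (T.v.take i)) : ℝ) := by
      linarith
    have hone : (wdist φ x y : ℝ) ≤ 1 := by exact_mod_cast hxy
    have : (wdist φ x p : ℝ) ≤ 1 + (LmaxAux φ ω : ℝ) + ((1:ℝ)/75 + C + 1) := by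
      have hiR : (i:ℝ) ≤ (LmaxAux φ ω : ℝ) := by exact_mod_cast hiL
      linarith
    unfold LamAux
    linarith
  · -- q on the identity-word path based at x
    obtain ⟨i, hi, rfl⟩ := hq
    have h1 : wdist φ T.g₂ (T.g₂ * wordProd φ (T.w.take i)) ≤ i := wdist_base_le φ _ _ _
    have h3 : wdist φ x p ≤ wdist φ x (T.g₂ * wordProd φ (T.w.take i)) +
        wdist φ (T.g₂ * wordProd φ (T.w.take i)) p := wdist_triangle φ hsurj _ _ _
    have h4 : wdist φ (T.g₂ * wordProd φ (T.w.take i)) p =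
        wdist φ p (T.g₂ * wordProd φ (T.w.take i)) :=
      wdist_symm φ inv hφinv hsurj _ _
    have hiL : i ≤ LmaxAux φ ω := le_trans hi (le_max_left _ _)
    rw [h4] at h3
    have hiR : (i:ℝ) ≤ (LmaxAux φ ω : ℝ) := by exact_mod_cast hiL
    have hx2 : (wdist φ x (T.g₂ * wordProd φ (T.w.take i)) : ℝ) ≤ (i:ℝ) := by
      exact_mod_cast h1
    have h3R : (wdist φ x p : ℝ) ≤ (wdist φ x (T.g₂ * wordProd φ (T.w.take i)) : ℝ) +
        (wdist φ p (T.g₂ * wordProd φ (T.w.take i)) : ℝ) := by exact_mod_cast h3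
    unfold LamAux
    linarith

/-- The error term of the halving lemma. -/
noncomputable def EEAux (C Λ : ℝ) (L : ℕ) : ℝ :=
  2 * L / 75 + (C + 2) * ((Nat.clog 2 L : ℝ) + 1) + Λ

lemma EEAux_mono {C Λ : ℝ} (hC : 0 ≤ C) {L L' : ℕ} (h : L ≤ L') :
    EEAux C Λ L ≤ EEAux C Λ L' := by
  unfold EEAux
  have h1 : (L:ℝ) ≤ L' := by exact_mod_cast h
  have h2 : ((Nat.clog 2 L : ℕ) : ℝ) ≤ (Nat.clog 2 L' : ℕ) := by
    exact_mod_cast Nat.clog_mono_right 2 h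
  nlinarith

lemma le_EEAux {C Λ : ℝ} (hC : 0 ≤ C) (L : ℕ) : Λ ≤ EEAux C Λ L := by
  unfold EEAux
  have h1 : (0:ℝ) ≤ (L:ℝ) := by positivity
  have h2 : (0:ℝ) ≤ ((Nat.clog 2 L : ℕ) : ℝ) := by positivity
  nlinarith

/-- The halving lemma: every point on a combing path from `x` to `y` is close to the
vertex set of any unit chain from `x` to `y`. -/
lemma halving
    (hφinv : ∀ a, φ (inv a) = (φ a)⁻¹)
    (hsurj : Function.Surjective (wordProd φ))
    (hC : 0 ≤ C)
    (hwidth : ∀ T : Tri S G φ, T.u ∈ R → T.v ∈ R → T.w ∈ R →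
      triWidth φ T ≤ (triNorm φ T : ℝ) / 75 + C)
    (hωR : ∀ v, ω v ∈ R) (hωP : ∀ v, wordProd φ (ω v) = v) :
    ∀ L : ℕ, ∀ x y : G, ∀ ch : ℕ → G, ch 0 = x → ch L = y →
    (∀ t < L, wdist φ (ch t) (ch (t + 1)) ≤ 1) →
    ∀ p ∈ pathPoints φ x (ω (x⁻¹ * y)),
    ∃ t ≤ L, (wdist φ p (ch t) : ℝ) ≤ EEAux C (LamAux φ C ω) L := by
  intro L
  induction L using Nat.strong_induction_on with
  | _ L IH =>
  intro x y ch h0 hL hstep p hp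
  by_cases hL1 : L ≤ 1
  · -- base case : x and y are at distance at most 1
    have hxy : wdist φ x y ≤ 1 := by
      rcases Nat.le_one_iff_eq_zero_or_eq_one.1 hL1 with h | h
      · subst h
        have : y = x := by rw [← h0, ← hL]
        subst this
        simp [wdist_self]
      · subst h
        have := hstep 0 (by norm_num)
        rwa [h0, hL] at this
    have hup := unit_excursion inv φ R C ω hφinv hsurj hC hwidth hωR hωP x y hxy p hp
    refine ⟨0, Nat.zero_le _, ?_⟩
    rw [h0]
    have hsym : wdist φ p x = wdist φ x p := wdist_symm φ inv hφinv hsurj _ _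
    rw [hsym]
    exact hup.trans (le_EEAux hC L)
  · push_neg at hL1
    have hL2 : 2 ≤ L := hL1
    set q : ℕ := (L + 1) / 2 with hqdef
    have hq1 : 1 ≤ q := by omega
    have hq2 : q < L := by omega
    have hq3 : L - q ≤ q := by omega
    have hq4 : 2 * q ≤ L + 1 := by omega
    set m : G := ch q with hm
    set T : Tri S G φ :=
      ⟨x, y, m, ω (x⁻¹ * y), ω (y⁻¹ * m), ω (m⁻¹ * x),
        by rw [hωP], by rw [hωP], by exact hωP _⟩ with hT
    have hnormN : triNorm φ T ≤ L := by
      have n1 : wdist φ x y ≤ L := by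
        have := chain_wdist_le φ hsurj ch L hstep 0 L (Nat.zero_le _) le_rfl
        rwa [h0, hL, Nat.sub_zero] at this
      have n2 : wdist φ y m ≤ L := by
        have := chain_wdist_le φ hsurj ch L hstep q L hq2.le le_rfl
        rw [hL] at this
        have hsym : wdist φ y m = wdist φ m y := wdist_symm φ inv hφinv hsurj _ _
        rw [hsym, hm]
        omega
      have n3 : wdist φ x m ≤ L := by
        have := chain_wdist_le φ hsurj ch L hstep 0 q (Nat.zero_le _) hq2.le
        rw [h0] at this
        rw [hm]
        omega
      show max (wdist φ x y) (max (wdist φ y m) (wdist φ x m)) ≤ L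
      omega
    have hthin : IsThin φ ((L:ℝ)/75 + C + 1) T := by
      have h1 := isThin_of_width_le φ (hwidth T (hωR _) (hωR _) (hωR _))
      refine isThin_mono φ h1 ?_
      have : (triNorm φ T : ℝ) ≤ (L:ℝ) := by exact_mod_cast hnormN
      linarith
    obtain ⟨qq, hqq, hd⟩ := hthin.1 p hp
    have harith : (L:ℝ)/75 + C + 1 + EEAux C (LamAux φ C ω) q ≤ EEAux C (LamAux φ C ω) L := by
      have hclog : Nat.clog 2 L = Nat.clog 2 q + 1 := by
        have he : (L + 2 - 1) / 2 = q := by omega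
        rw [Nat.clog_of_two_le (by norm_num) hL2, he]
      unfold EEAux
      rw [hclog]
      push_cast
      have hq4' : 2 * (q:ℝ) ≤ (L:ℝ) + 1 := by exact_mod_cast hq4
      linarith
    rcases hqq with hqq | hqq
    · -- qq on the combing path from y to m; use the reversed upper half chain
      have hqq' : qq ∈ pathPoints φ y (ω (y⁻¹ * m)) := hqq
      obtain ⟨t', ht', hb⟩ := IH (L - q) (by omega) y m (fun t => ch (L - t))
        (by simp [hL]) (by show ch (L - (L - q)) = m; rw [Nat.sub_sub_self hq2.le, hm])
        (by
          intro t ht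
          have e1 : L - (t + 1) = (L - t) - 1 := by omega
          have e2 : ((L - t) - 1) + 1 = L - t := by omega
          have hsym : wdist φ (ch (L - t)) (ch (L - (t+1))) =
              wdist φ (ch (L - (t+1))) (ch (L - t)) := wdist_symm φ inv hφinv hsurj _ _
          rw [hsym, e1, ← e2]
          exact hstep ((L - t) - 1) (by omega))
        qq hqq'
      refine ⟨L - t', by omega, ?_⟩
      have htri : wdist φ p (ch (L - t')) ≤ wdist φ p qq + wdist φ qq (ch (L - t')) :=
        wdist_triangle φ hsurj _ _ _
      have htriR : (wdist φ p (ch (L - t')) : ℝ) ≤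
          (wdist φ p qq : ℝ) + (wdist φ qq (ch (L - t')) : ℝ) := by exact_mod_cast htri
      have hmono : EEAux C (LamAux φ C ω) (L - q) ≤ EEAux C (LamAux φ C ω) q :=
        EEAux_mono hC hq3
      linarith
    · -- qq on the combing path from m to x; use the reversed lower half chain
      have hqq' : qq ∈ pathPoints φ m (ω (m⁻¹ * x)) := hqq
      obtain ⟨t', ht', hb⟩ := IH q (by omega) m x (fun t => ch (q - t))
        (by simp [hm]) (by simp [h0])
        (by
          intro t ht
          have e1 : q - (t + 1) = (q - t) - 1 := by omega
          have e2 : ((q - t) - 1) + 1 = q - t := by omega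
          have hsym : wdist φ (ch (q - t)) (ch (q - (t+1))) =
              wdist φ (ch (q - (t+1))) (ch (q - t)) := wdist_symm φ inv hφinv hsurj _ _
          rw [hsym, e1, ← e2]
          exact hstep ((q - t) - 1) (by omega))
        qq hqq'
      refine ⟨q - t', by omega, ?_⟩
      have htri : wdist φ p (ch (q - t')) ≤ wdist φ p qq + wdist φ qq (ch (q - t')) :=
        wdist_triangle φ hsurj _ _ _
      have htriR : (wdist φ p (ch (q - t')) : ℝ) ≤
          (wdist φ p qq : ℝ) + (wdist φ qq (ch (q - t')) : ℝ) := by exact_mod_cast htri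
      linarith

lemma int_ivt (F : ℕ → ℤ) (N : ℕ) (h0 : F 0 ≤ 0) (hN : 0 ≤ F N)
    (hstep : ∀ s < N, F (s + 1) ≤ F s + 2) : ∃ s ≤ N, -1 ≤ F s ∧ F s ≤ 1 := by
  induction N with
  | zero => exact ⟨0, le_rfl, by omega, by omega⟩
  | succ M ih =>
      by_cases h : 0 ≤ F M
      · obtain ⟨s, hs, h1, h2⟩ := ih h (fun s hs => hstep s (by omega))
        exact ⟨s, by omega, h1, h2⟩
      · push_neg at h
        refine ⟨M + 1, le_rfl, by omega, ?_⟩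
        have := hstep M (by omega)
        omega

/-- There is a metrically balanced point on every combing path. -/
lemma balanced_point
    (hφinv : ∀ a, φ (inv a) = (φ a)⁻¹)
    (hsurj : Function.Surjective (wordProd φ))
    (hωP : ∀ v, wordProd φ (ω v) = v) (x y : G) :
    ∃ p ∈ pathPoints φ x (ω (x⁻¹ * y)),
      (wdist φ x p : ℤ) ≤ (wdist φ p y : ℤ) + 1 ∧
      (wdist φ p y : ℤ) ≤ (wdist φ x p : ℤ) + 1 := by
  set w : List S := ω (x⁻¹ * y) with hw
  set pt : ℕ → G := fun s => x * wordProd φ (w.take s) with hpt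
  have hpt0 : pt 0 = x := by simp [hpt, wordProd]
  have hptN : pt w.length = y := by
    simp only [hpt, List.take_length]
    rw [hw, hωP]
    group
  set F : ℕ → ℤ := fun s => (wdist φ x (pt s) : ℤ) - (wdist φ (pt s) y : ℤ) with hF
  have hadj : ∀ s, wdist φ (pt s) (pt (s + 1)) ≤ 1 := by
    intro s
    have := wdist_take_le φ x w (s := s) (t := s + 1) (Nat.le_succ s)
    simpa using this
  have h0 : F 0 ≤ 0 := by
    simp only [hF, hpt0, wdist_self]
    omega
  have hN : 0 ≤ F w.length := by
    simp only [hF, hptN, wdist_self]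
    omega
  have hstep : ∀ s < w.length, F (s + 1) ≤ F s + 2 := by
    intro s _
    have t1 : wdist φ x (pt (s + 1)) ≤ wdist φ x (pt s) + wdist φ (pt s) (pt (s + 1)) :=
      wdist_triangle φ hsurj _ _ _
    have t2 : wdist φ (pt s) y ≤ wdist φ (pt s) (pt (s + 1)) + wdist φ (pt (s + 1)) y :=
      wdist_triangle φ hsurj _ _ _
    have := hadj s
    simp only [hF]
    omega
  obtain ⟨s, hs, h1, h2⟩ := int_ivt F w.length h0 hN hstep
  refine ⟨pt s, ⟨s, hs, rfl⟩, ?_, ?_⟩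
  · simp only [hF] at h1 h2; omega
  · simp only [hF] at h1 h2; omega

/-- A vertex on any unit chain from `x` to `y` which is close to both `x` and `y`. -/
lemma mid_vertex
    (hφinv : ∀ a, φ (inv a) = (φ a)⁻¹)
    (hsurj : Function.Surjective (wordProd φ))
    (hC : 0 ≤ C)
    (hwidth : ∀ T : Tri S G φ, T.u ∈ R → T.v ∈ R → T.w ∈ R →
      triWidth φ T ≤ (triNorm φ T : ℝ) / 75 + C)
    (hωR : ∀ v, ω v ∈ R) (hωP : ∀ v, wordProd φ (ω v) = v)
    (x y : G) (a : ℕ) (ch : ℕ → G)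
    (h0 : ch 0 = x) (ha : ch a = y)
    (hstep : ∀ t < a, wdist φ (ch t) (ch (t + 1)) ≤ 1) :
    ∃ t ≤ a,
      (wdist φ x (ch t) : ℝ) ≤ (wdist φ x y : ℝ) / 2 +
        EEAux C (LamAux φ C ω) (wdist φ x y) + EEAux C (LamAux φ C ω) a + 1 ∧
      (wdist φ (ch t) y : ℝ) ≤ (wdist φ x y : ℝ) / 2 +
        EEAux C (LamAux φ C ω) (wdist φ x y) + EEAux C (LamAux φ C ω) a + 1 := by
  obtain ⟨p, hp, hb1, hb2⟩ := balanced_point inv φ ω hφinv hsurj hωP x y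
  set M : ℕ := wdist φ x y with hM
  obtain ⟨γ, hγ, hγlen⟩ := exists_geodesic φ hsurj x y
  set c : ℕ → G := fun r => x * wordProd φ (γ.take r) with hc
  have hc0 : c 0 = x := by simp [hc, wordProd]
  have hcM : c M = y := by
    show x * wordProd φ (γ.take M) = y
    rw [hM, ← hγlen, List.take_length, hγ]
    group
  have hcstep : ∀ r < M, wdist φ (c r) (c (r + 1)) ≤ 1 := by
    intro r _
    have := wdist_take_le φ x γ (s := r) (t := r + 1) (Nat.le_succ r)
    simpa using this
  -- the balanced point is close to a geodesic vertex
  obtain ⟨r, hr, hbr⟩ := halving inv φ R C ω hφinv hsurj hC hwidth hωR hωP M x y c hc0 hcM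
    hcstep p hp
  -- hence close to the metric midpoint of x and y
  have hxc : wdist φ x (c r) ≤ r := by
    have := wdist_base_le φ x γ r
    exact this
  have hcy : wdist φ (c r) y ≤ M - r := by
    have h1 := wdist_tip_le φ x γ (s := r) (by omega)
    have h2 : x * wordProd φ γ = y := by rw [hγ]; group
    rw [h2] at h1
    rw [hγlen] at h1
    exact h1
  have hxp : (wdist φ x p : ℝ) ≤ (M:ℝ)/2 + EEAux C (LamAux φ C ω) M + 1 ∧
      (wdist φ p y : ℝ) ≤ (M:ℝ)/2 + EEAux C (LamAux φ C ω) M + 1 := by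
    have e1 : wdist φ x p ≤ wdist φ x (c r) + wdist φ (c r) p := wdist_triangle φ hsurj _ _ _
    have e2 : wdist φ p y ≤ wdist φ p (c r) + wdist φ (c r) y := wdist_triangle φ hsurj _ _ _
    have e3 : wdist φ (c r) p = wdist φ p (c r) := wdist_symm φ inv hφinv hsurj _ _
    rw [e3] at e1
    have r1 : (wdist φ x p : ℝ) ≤ (r:ℝ) + (wdist φ p (c r) : ℝ) := by
      have hxcR : (wdist φ x (c r) : ℝ) ≤ (r:ℝ) := by exact_mod_cast hxc
      have e1R : (wdist φ x p : ℝ) ≤ (wdist φ x (c r) : ℝ) + (wdist φ p (c r) : ℝ) := by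
        exact_mod_cast e1
      linarith
    have r2 : (wdist φ p y : ℝ) ≤ ((M:ℝ) - r) + (wdist φ p (c r) : ℝ) := by
      have hcyR : (wdist φ (c r) y : ℝ) ≤ (M:ℝ) - r := by
        have : ((M - r : ℕ) : ℝ) = (M:ℝ) - r := by
          have : r ≤ M := hr
          push_cast [Nat.cast_sub this]
          ring
        rw [← this]
        exact_mod_cast hcy
      have e2R : (wdist φ p y : ℝ) ≤ (wdist φ p (c r) : ℝ) + (wdist φ (c r) y : ℝ) := by
        exact_mod_cast e2
      linarith
    have hb1R : (wdist φ x p : ℝ) ≤ (wdist φ p y : ℝ) + 1 := by exact_mod_cast hb1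
    have hb2R : (wdist φ p y : ℝ) ≤ (wdist φ x p : ℝ) + 1 := by exact_mod_cast hb2
    rcases le_or_gt (2 * r) M with h2r | h2r
    · have hrM : (r:ℝ) ≤ (M:ℝ)/2 := by
        have : (2*r : ℕ) ≤ (M : ℕ) := h2r
        have := (Nat.cast_le (α := ℝ)).2 this
        push_cast at this
        linarith
      constructor
      · linarith
      · linarith
    · have hrM : (M:ℝ) - r ≤ (M:ℝ)/2 := by
        have : (M : ℕ) ≤ 2*r := h2r.le
        have := (Nat.cast_le (α := ℝ)).2 this
        push_cast at this
        linarith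
      constructor
      · linarith
      · linarith
  -- the balanced point is close to a chain vertex
  obtain ⟨t, ht, hbt⟩ := halving inv φ R C ω hφinv hsurj hC hwidth hωR hωP a x y ch h0 ha
    hstep p hp
  refine ⟨t, ht, ?_, ?_⟩
  · have e1 : wdist φ x (ch t) ≤ wdist φ x p + wdist φ p (ch t) := wdist_triangle φ hsurj _ _ _
    have e1R : (wdist φ x (ch t) : ℝ) ≤ (wdist φ x p : ℝ) + (wdist φ p (ch t) : ℝ) := by
      exact_mod_cast e1
    have := hxp.1
    linarith
  · have e1 : wdist φ (ch t) y ≤ wdist φ (ch t) p + wdist φ p y := wdist_triangle φ hsurj _ _ _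
    have e2 : wdist φ (ch t) p = wdist φ p (ch t) := wdist_symm φ inv hφinv hsurj _ _
    rw [e2] at e1
    have e1R : (wdist φ (ch t) y : ℝ) ≤ (wdist φ p (ch t) : ℝ) + (wdist φ p y : ℝ) := by
      exact_mod_cast e1
    have := hxp.2
    linarith

end Geometry

lemma crossesDiag_iff (p q : ℕ × ℕ) : CrossesDiag p q ↔
    (p.1 < q.1 ∧ q.1 < p.2 ∧ p.2 < q.2) ∨ (q.1 < p.1 ∧ p.1 < q.2 ∧ q.2 < p.2) := Iff.rfl

lemma sq_le_four_two_pow : ∀ k : ℕ, k ^ 2 ≤ 4 * 2 ^ k := by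
  intro k
  induction k with
  | zero => norm_num
  | succ m ih =>
      have h0 : m < 2 ^ m := Nat.lt_two_pow_self
      have h1 : 1 ≤ 2 ^ m := Nat.one_le_two_pow
      have h2 : (m + 1) ^ 2 = m ^ 2 + (2 * m + 1) := by ring
      have h3 : 2 * m + 1 ≤ 4 * 2 ^ m := by omega
      have h4 : 4 * 2 ^ (m + 1) = 4 * 2 ^ m + 4 * 2 ^ m := by ring
      omega

lemma clog_growth {ε : ℝ} (hε : 0 < ε) (n : ℕ) :
    (Nat.clog 2 n : ℝ) ≤ ε * n + (1 / ε + 1) := by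
  by_cases hn : n ≤ 1
  · rw [Nat.clog_of_right_le_one hn]
    have : (0:ℝ) ≤ ε * n := by positivity
    have : (0:ℝ) ≤ 1/ε := by positivity
    push_cast
    linarith
  · push_neg at hn
    set m : ℕ := Nat.clog 2 n with hm
    have hm1 : 1 ≤ m := Nat.clog_pos (by norm_num) hn
    have h2 : 2 ^ (m - 1) < n := by
      have := Nat.pow_pred_clog_lt_self (b := 2) (by norm_num) hn
      simpa [Nat.pred_eq_sub_one] using this
    have h3 : (m - 1) ^ 2 ≤ 4 * n := by
      have := sq_le_four_two_pow (m - 1)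
      omega
    have hx : ((m - 1 : ℕ) : ℝ) = (m : ℝ) - 1 := by
      push_cast [Nat.cast_sub hm1]
      ring
    have h3R : ((m:ℝ) - 1) ^ 2 ≤ 4 * n := by
      rw [← hx]
      exact_mod_cast h3
    have hx0 : (0:ℝ) ≤ (m:ℝ) - 1 := by
      have : (1:ℝ) ≤ (m:ℝ) := by exact_mod_cast hm1
      linarith
    have hinv : ε * (1 / ε) = 1 := by field_simp
    nlinarith [sq_nonneg (ε * ((m:ℝ) - 1) - 2),
      mul_le_mul_of_nonneg_left h3R (le_of_lt (mul_pos hε hε)), hinv, hε, hx0]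

lemma catalan_aux (n : ℕ) (d : ℕ → ℕ → Prop)
    (hsplit : ∀ i j, 1 ≤ i → i < j → j ≤ n → d i j → i + 2 ≤ j →
      ∃ k, i < k ∧ k < j ∧ d i k ∧ d k j) :
    ∀ m i j, j - i ≤ m → 1 ≤ i → i < j → j ≤ n → d i j →
    ∃ T : Set (ℕ × ℕ),
      (∀ p ∈ T, i ≤ p.1 ∧ p.1 + 1 < p.2 ∧ p.2 ≤ j ∧ ¬(p.1 = i ∧ p.2 = j)) ∧
      (∀ p ∈ T, ∀ q ∈ T, ¬CrossesDiag p q) ∧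
      (∀ p : ℕ × ℕ, i ≤ p.1 → p.1 + 1 < p.2 → p.2 ≤ j → ¬(p.1 = i ∧ p.2 = j) → p ∉ T →
        ∃ q ∈ T, CrossesDiag p q) ∧
      (∀ p ∈ T, d p.1 p.2) := by
  intro m
  induction m with
  | zero => intro i j h1 h2 h3 h4 h5; omega
  | succ m IH =>
      intro i j hm h1 hij hjn hd
      by_cases hsmall : j ≤ i + 1
      · refine ⟨∅, by simp, by simp, ?_, by simp⟩
        intro p hp1 hp2 hp3 _ _
        omega
      · push_neg at hsmall
        obtain ⟨k, hik, hkj, hdik, hdkj⟩ := hsplit i j h1 hij hjn hd (by omega)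
        obtain ⟨T₁, T₁sub, T₁nc, T₁max, T₁d⟩ :=
          IH i k (by omega) h1 hik (by omega) hdik
        obtain ⟨T₂, T₂sub, T₂nc, T₂max, T₂d⟩ :=
          IH k j (by omega) (by omega) hkj hjn hdkj
        set E : Set (ℕ × ℕ) :=
          {p | (p = (i, k) ∧ i + 1 < k) ∨ (p = (k, j) ∧ k + 1 < j)} with hE
        have hEmem : ∀ p : ℕ × ℕ, p ∈ E ↔
            ((p = (i, k) ∧ i + 1 < k) ∨ (p = (k, j) ∧ k + 1 < j)) := fun p => Iff.rfl
        have hT₁b : ∀ p ∈ T₁, i ≤ p.1 ∧ p.1 + 1 < p.2 ∧ p.2 ≤ k := by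
          intro p hp; obtain ⟨a1, a2, a3, _⟩ := T₁sub p hp; exact ⟨a1, a2, a3⟩
        have hT₂b : ∀ p ∈ T₂, k ≤ p.1 ∧ p.1 + 1 < p.2 ∧ p.2 ≤ j := by
          intro p hp; obtain ⟨a1, a2, a3, _⟩ := T₂sub p hp; exact ⟨a1, a2, a3⟩
        have hEb : ∀ p ∈ E, i ≤ p.1 ∧ p.1 + 1 < p.2 ∧ p.2 ≤ j := by
          intro p hp
          rcases (hEmem p).1 hp with ⟨rfl, hk⟩ | ⟨rfl, hk⟩
          · exact ⟨le_rfl, by omega, by omega⟩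
          · exact ⟨by omega, by omega, le_rfl⟩
        refine ⟨T₁ ∪ T₂ ∪ E, ?_, ?_, ?_, ?_⟩
        · rintro p ((hp | hp) | hp)
          · obtain ⟨a1, a2, a3, _⟩ := T₁sub p hp
            exact ⟨a1, a2, by omega, by omega⟩
          · obtain ⟨a1, a2, a3, _⟩ := T₂sub p hp
            exact ⟨by omega, a2, a3, by omega⟩
          · rcases (hEmem p).1 hp with ⟨rfl, hk⟩ | ⟨rfl, hk⟩
            · exact ⟨le_rfl, by omega, by omega, by omega⟩
            · exact ⟨by omega, by omega, le_rfl, by omega⟩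
        · -- noncrossing
          have key : ∀ p q : ℕ × ℕ,
              (p ∈ T₁ ∪ T₂ ∪ E) → (q ∈ T₁ ∪ T₂ ∪ E) → ¬CrossesDiag p q := by
            rintro p q hp hq hcr
            rw [crossesDiag_iff] at hcr
            rcases hp with (hp | hp) | hp
            · rcases hq with (hq | hq) | hq
              · exact T₁nc p hp q hq (by rw [crossesDiag_iff]; exact hcr)
              · obtain ⟨a1, a2, a3⟩ := hT₁b p hp
                obtain ⟨b1, b2, b3⟩ := hT₂b q hq
                omega
              · obtain ⟨a1, a2, a3⟩ := hT₁b p hp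
                rcases (hEmem q).1 hq with ⟨rfl, hk⟩ | ⟨rfl, hk⟩ <;>
                  simp only [Prod.fst, Prod.snd] at hcr <;> omega
            · rcases hq with (hq | hq) | hq
              · obtain ⟨a1, a2, a3⟩ := hT₂b p hp
                obtain ⟨b1, b2, b3⟩ := hT₁b q hq
                omega
              · exact T₂nc p hp q hq (by rw [crossesDiag_iff]; exact hcr)
              · obtain ⟨a1, a2, a3⟩ := hT₂b p hp
                rcases (hEmem q).1 hq with ⟨rfl, hk⟩ | ⟨rfl, hk⟩ <;>
                  simp only [Prod.fst, Prod.snd] at hcr <;> omega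
            · rcases (hEmem p).1 hp with ⟨rfl, hk⟩ | ⟨rfl, hk⟩ <;>
              · rcases hq with (hq | hq) | hq
                · obtain ⟨b1, b2, b3⟩ := hT₁b q hq
                  simp only [Prod.fst, Prod.snd] at hcr; omega
                · obtain ⟨b1, b2, b3⟩ := hT₂b q hq
                  simp only [Prod.fst, Prod.snd] at hcr; omega
                · rcases (hEmem q).1 hq with ⟨rfl, hk'⟩ | ⟨rfl, hk'⟩ <;>
                    simp only [Prod.fst, Prod.snd] at hcr <;> omega
          exact fun p hp q hq => key p q hp hq
        · -- maximality
          intro p hp1 hp2 hp3 hpne hpT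
          have hpT₁ : p ∉ T₁ := fun h => hpT (Or.inl (Or.inl h))
          have hpT₂ : p ∉ T₂ := fun h => hpT (Or.inl (Or.inr h))
          have hpE : p ∉ E := fun h => hpT (Or.inr h)
          by_cases hc1 : p.2 ≤ k
          · by_cases hik2 : p.1 = i ∧ p.2 = k
            · exfalso
              apply hpE
              refine (hEmem p).2 (Or.inl ⟨?_, ?_⟩)
              · obtain ⟨e1, e2⟩ := hik2
                exact Prod.ext e1 e2
              · omega
            · obtain ⟨q, hq, hcr⟩ := T₁max p hp1 hp2 hc1 hik2 hpT₁
              exact ⟨q, Or.inl (Or.inl hq), hcr⟩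
          · by_cases hc2 : k ≤ p.1
            · by_cases hkj2 : p.1 = k ∧ p.2 = j
              · exfalso
                apply hpE
                refine (hEmem p).2 (Or.inr ⟨?_, ?_⟩)
                · obtain ⟨e1, e2⟩ := hkj2
                  exact Prod.ext e1 e2
                · omega
              · obtain ⟨q, hq, hcr⟩ := T₂max p hc2 hp2 hp3 hkj2 hpT₂
                exact ⟨q, Or.inl (Or.inr hq), hcr⟩
            · push_neg at hc1 hc2
              by_cases hpi : i < p.1
              · refine ⟨(i, k), Or.inr ((hEmem _).2 (Or.inl ⟨rfl, by omega⟩)), ?_⟩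
                rw [crossesDiag_iff]
                right
                exact ⟨by omega, by omega, by omega⟩
              · push_neg at hpi
                have hp1i : p.1 = i := by omega
                have hp2j : p.2 < j := by
                  rcases Nat.lt_or_ge p.2 j with h | h
                  · exact h
                  · exfalso; exact hpne ⟨hp1i, by omega⟩
                refine ⟨(k, j), Or.inr ((hEmem _).2 (Or.inr ⟨rfl, by omega⟩)), ?_⟩
                rw [crossesDiag_iff]
                left
                exact ⟨by omega, by omega, by omega⟩
        · rintro p ((hp | hp) | hp)
          · exact T₁d p hp
          · exact T₂d p hp
          · rcases (hEmem p).1 hp with ⟨rfl, _⟩ | ⟨rfl, _⟩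
            · exact hdik
            · exact hdkj

/-- Under the flabby-triangle hypothesis there is a constant `K` such that
every cyclic sequence `g₁, …, gₙ` (`n ≥ 4`) with consecutive distances at most `1` admits a
triangulation of the labelled convex `n`-gon all of whose diagonals `{i,j}` satisfy
`d(g_i, g_j) ≤ n/6 + K`. -/
theorem triangulation_of_cycles {S G : Type} [Fintype S] [Group G]
    (inv : S → S) (hinv_inv : ∀ a, inv (inv a) = a) (hinv_ne : ∀ a, inv a ≠ a)
    (φ : S → G) (hsurj : Function.Surjective (wordProd φ))
    (hφinv : ∀ a, φ (inv a) = (φ a)⁻¹)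
    (R : Language S) (hcomb : IsCombing φ R) (C : ℝ) (hC : 0 ≤ C)
    (hwidth : ∀ T : Tri S G φ, T.u ∈ R → T.v ∈ R → T.w ∈ R →
      triWidth φ T ≤ (triNorm φ T : ℝ) / 75 + C) :
    ∃ K : ℝ, ∀ n : ℕ, 4 ≤ n → ∀ g : ℕ → G,
      (∀ i : ℕ, 1 ≤ i → i < n → wdist φ (g i) (g (i + 1)) ≤ 1) →
      wdist φ (g n) (g 1) ≤ 1 →
      ∃ D : Set (ℕ × ℕ),
        (∀ p ∈ D, IsDiagonal n p) ∧
        (∀ p ∈ D, ∀ q ∈ D, ¬CrossesDiag p q) ∧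
        (∀ p, IsDiagonal n p → p ∉ D → ∃ q ∈ D, CrossesDiag p q) ∧
        (∀ p ∈ D, (wdist φ (g p.1) (g p.2) : ℝ) ≤ (n : ℝ) / 6 + K) := by
  classical
  choose ω hωmem hωprod using hcomb
  have hΛ0 : 0 ≤ LamAux φ C ω := LamAux_nonneg φ C ω hC
  have hC2 : (0:ℝ) < C + 2 := by linarith
  obtain ⟨K, hK10, hKmaster⟩ : ∃ K : ℝ, 10 ≤ K ∧
      ∀ m : ℕ, 2 * EEAux C (LamAux φ C ω) m + 1 ≤ (((m:ℝ)/6 + K - 2) - 2)/2 := by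
    set ε : ℝ := 3 / (200 * (C + 2)) with hεdef
    have hε0 : 0 < ε := by positivity
    refine ⟨2 * (2*(C+2)*(1/ε + 1) + 2*(C+2) + 2*(LamAux φ C ω) + 1) + 10, ?_, ?_⟩
    · have h1 : (0:ℝ) ≤ 2*(C+2)*(1/ε + 1) := by positivity
      linarith
    · intro m
      have hclog := clog_growth hε0 m
      have hmul : 2*(C+2) * ((Nat.clog 2 m : ℕ) : ℝ) ≤ 2*(C+2) * (ε * m + (1/ε + 1)) :=
        mul_le_mul_of_nonneg_left hclog (by linarith)
      have hee : 2*(C+2) * (ε * (m:ℝ)) = 3/100 * m := by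
        rw [hεdef]
        field_simp
        ring
      have hm0 : (0:ℝ) ≤ (m:ℝ) := by positivity
      unfold EEAux
      nlinarith [hmul, hee, hm0]
  refine ⟨K, ?_⟩
  intro n hn g hstep hwrap
  have hnR : (4:ℝ) ≤ (n:ℝ) := by exact_mod_cast hn
  obtain ⟨B₀, hB₀def⟩ : ∃ B₀ : ℝ, B₀ = (n:ℝ)/6 + K - 2 := ⟨_, rfl⟩
  have hB₀2 : (2:ℝ) ≤ B₀ := by rw [hB₀def]; linarith
  have hmaster : 2 * EEAux C (LamAux φ C ω) n + 1 ≤ (B₀ - 2)/2 := by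
    rw [hB₀def]
    exact hKmaster n
  -- symmetrised wrap-around bound
  have hd1n : (wdist φ (g 1) (g n) : ℝ) ≤ B₀ := by
    have h1 : wdist φ (g 1) (g n) = wdist φ (g n) (g 1) := wdist_symm φ inv hφinv hsurj _ _
    have h2 : (wdist φ (g n) (g 1) : ℝ) ≤ 1 := by exact_mod_cast hwrap
    rw [h1]
    linarith
  -- the splitting step
  have hsplit : ∀ i j, 1 ≤ i → i < j → j ≤ n →
      ((wdist φ (g i) (g j) : ℝ) ≤ B₀) → i + 2 ≤ j →
      ∃ k, i < k ∧ k < j ∧ (wdist φ (g i) (g k) : ℝ) ≤ B₀ ∧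
        (wdist φ (g k) (g j) : ℝ) ≤ B₀ := by
    intro i j hi hij hjn hdij hij2
    by_cases hMs : (wdist φ (g i) (g j) : ℝ) ≤ B₀ - 1
    · refine ⟨i + 1, by omega, by omega, ?_, ?_⟩
      · have h1 : wdist φ (g i) (g (i+1)) ≤ 1 := hstep i hi (by omega)
        have h2 : (wdist φ (g i) (g (i+1)) : ℝ) ≤ 1 := by exact_mod_cast h1
        linarith
      · have h1 : wdist φ (g (i+1)) (g j) ≤
            wdist φ (g (i+1)) (g i) + wdist φ (g i) (g j) := wdist_triangle φ hsurj _ _ _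
        have h2 : wdist φ (g (i+1)) (g i) = wdist φ (g i) (g (i+1)) :=
          wdist_symm φ inv hφinv hsurj _ _
        have h3 : wdist φ (g i) (g (i+1)) ≤ 1 := hstep i hi (by omega)
        have h4 : (wdist φ (g (i+1)) (g j) : ℝ) ≤ 1 + (wdist φ (g i) (g j) : ℝ) := by
          rw [h2] at h1
          have := h1
          push_cast
          have h1R : (wdist φ (g (i+1)) (g j) : ℝ) ≤
              (wdist φ (g i) (g (i+1)) : ℝ) + (wdist φ (g i) (g j) : ℝ) := by
            exact_mod_cast h1
          have h3R : (wdist φ (g i) (g (i+1)) : ℝ) ≤ 1 := by exact_mod_cast h3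
          linarith
        linarith
    · push_neg at hMs
      set a : ℕ := j - i with hadef
      set ch : ℕ → G := fun t => g (i + t) with hch
      have hch0 : ch 0 = g i := by simp [hch]
      have hcha : ch a = g j := by
        simp only [hch]
        congr 1
        omega
      have hchstep : ∀ t < a, wdist φ (ch t) (ch (t+1)) ≤ 1 := by
        intro t ht
        have h1 := hstep (i + t) (by omega) (by omega)
        have e : i + t + 1 = i + (t + 1) := by omega
        rw [e] at h1
        exact h1
      obtain ⟨t, ht, hA, hB⟩ := mid_vertex inv φ R C ω hφinv hsurj hC hwidth hωmem hωprod
        (g i) (g j) a ch hch0 hcha hchstep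
      have hMn : wdist φ (g i) (g j) ≤ n := by
        have h1 := chain_wdist_le φ hsurj ch a hchstep 0 a (Nat.zero_le _) le_rfl
        rw [hch0, hcha] at h1
        omega
      have hman : a ≤ n := by omega
      have hEM : EEAux C (LamAux φ C ω) (wdist φ (g i) (g j)) ≤ EEAux C (LamAux φ C ω) n := EEAux_mono hC hMn
      have hEa : EEAux C (LamAux φ C ω) a ≤ EEAux C (LamAux φ C ω) n := EEAux_mono hC hman
      have hbound : ((wdist φ (g i) (g j) : ℕ) : ℝ)/2 + EEAux C (LamAux φ C ω) (wdist φ (g i) (g j)) +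
          EEAux C (LamAux φ C ω) a + 1 ≤ B₀ - 1 := by
        linarith
      have hAn : (wdist φ (g i) (ch t) : ℝ) ≤ B₀ - 1 := le_trans hA hbound
      have hBn : (wdist φ (ch t) (g j) : ℝ) ≤ B₀ - 1 := le_trans hB hbound
      have ht0 : t ≠ 0 := by
        intro h0'
        rw [h0', hch0] at hBn
        linarith
      have hta : t ≠ a := by
        intro ha'
        rw [ha', hcha] at hAn
        linarith
      refine ⟨i + t, by omega, by omega, ?_, ?_⟩
      · have : ch t = g (i + t) := rfl
        rw [← this]
        linarith
      · have : ch t = g (i + t) := rfl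
        rw [← this]
        linarith
  obtain ⟨T, Tsub, Tnc, Tmax, Td⟩ := catalan_aux n
    (fun i j => (wdist φ (g i) (g j) : ℝ) ≤ B₀) hsplit n 1 n (by omega) le_rfl
    (by omega) le_rfl hd1n
  refine ⟨T, ?_, Tnc, ?_, ?_⟩
  · intro p hp
    obtain ⟨a1, a2, a3, a4⟩ := Tsub p hp
    exact ⟨a1, a2, a3, a4⟩
  · intro p hp hpT
    obtain ⟨a1, a2, a3, a4⟩ := hp
    exact Tmax p a1 a2 a3 a4 hpT
  · intro p hp
    have := Td p hp
    rw [hB₀def] at this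
    linarith
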